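/- Let 1 < α < α₀, let u ≥ 0, and let μ be a probability measure on [0, ∞) satisfying ∫ x dμ(x) = 1 and ∫ k_{α₀}(x) dμ(x) ≤ u. Then ∫ k_α(x) dμ(x) ≤ (1/(α(α−1)))·[ (α₀(α₀−1)·u + 1)^{(α−1)/(α₀−1)} − 1 ]. -/

import Mathlib

open MeasureTheory

/-- `k_β(x) = (x^β − βx + β − 1)/(β(β−1))`. -/
noncomputable def kRenyi (β x : ℝ) : ℝ := (x ^ β - β * x + β - 1) / (β * (β - 1))

/-- If `μ` is a probability measure on `[0,∞)` with mean `1` and `∫ k_{α₀} dμ ≤ u`, then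
for `1 < α < α₀`, `∫ k_α dμ ≤ (1/(α(α−1)))·[(α₀(α₀−1)u + 1)^{(α−1)/(α₀−1)} − 1]`. -/
theorem integral_kRenyi_le_of_constraint (α α₀ u : ℝ) (hα : 1 < α) (hαα : α < α₀)
    (hu : 0 ≤ u) (μ : Measure ℝ) [IsProbabilityMeasure μ]
    (hsupp : ∀ᵐ x ∂μ, 0 ≤ x) (hmean : ∫ x, x ∂μ = 1)
    (hconstr : ∫⁻ x, ENNReal.ofReal (kRenyi α₀ x) ∂μ ≤ ENNReal.ofReal u) :
    ∫⁻ x, ENNReal.ofReal (kRenyi α x) ∂μ ≤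
      ENNReal.ofReal ((α * (α - 1))⁻¹
        * ((α₀ * (α₀ - 1) * u + 1) ^ ((α - 1) / (α₀ - 1)) - 1)) := by
  have hα0 : (1:ℝ) < α₀ := hα.trans hαα
  set θ : ℝ := (α - 1) / (α₀ - 1) with hθdef
  have hθ0 : 0 < θ := div_pos (by linarith) (by linarith)
  have hθ1 : θ < 1 := (div_lt_one (by linarith)).2 (by linarith)
  set C : ℝ := α₀ * (α₀ - 1) * u + 1 with hCdef
  have hC1 : 1 ≤ C := by
    have : 0 ≤ α₀ * (α₀ - 1) * u := by
      apply mul_nonneg (mul_nonneg (by linarith) (by linarith)) hu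
    simp [hCdef]; linarith
  -- nonnegativity of kRenyi
  have hknn : ∀ β : ℝ, 1 < β → ∀ x : ℝ, 0 ≤ x → 0 ≤ kRenyi β x := by
    intro β hβ x hx
    have h := one_add_mul_self_le_rpow_one_add (by linarith : (-1:ℝ) ≤ x - 1) hβ.le
    rw [show (1 + (x - 1)) = x by ring] at h
    have hden : 0 < β * (β - 1) := mul_pos (by linarith) (by linarith)
    exact div_nonneg (by linarith) hden.le
  have hkmeas : ∀ β : ℝ, Measurable (kRenyi β) := by
    intro β; unfold kRenyi; fun_prop
  -- integrability of identity
  have hx_int : Integrable (fun x : ℝ => x) μ := by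
    by_contra h
    rw [show (∫ x, x ∂μ) = ∫ x, (fun y : ℝ => y) x ∂μ from rfl, integral_undef h] at hmean
    norm_num at hmean
  -- kRenyi α₀ is integrable
  have hk0nn : ∀ᵐ x ∂μ, 0 ≤ kRenyi α₀ x := hsupp.mono fun x hx => hknn α₀ hα0 x hx
  have hk0_int : Integrable (kRenyi α₀) μ := by
    refine ⟨(hkmeas α₀).aestronglyMeasurable, ?_⟩
    rw [HasFiniteIntegral,
      lintegral_congr_ae (hk0nn.mono fun x hx => Real.enorm_eq_ofReal hx)]
    exact hconstr.trans_lt ENNReal.ofReal_lt_top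
  have hIk0 : ∫ x, kRenyi α₀ x ∂μ ≤ u := by
    refine (ENNReal.ofReal_le_ofReal_iff hu).1 ?_
    rw [ofReal_integral_eq_lintegral_ofReal hk0_int hk0nn]
    exact hconstr
  -- decomposition: x^β = β(β-1) k_β(x) + βx - β + 1
  have hdecomp : ∀ β : ℝ, 1 < β → ∀ x : ℝ,
      x ^ β = β * (β - 1) * kRenyi β x + β * x - β + 1 := by
    intro β hβ x
    have h : β * (β - 1) ≠ 0 := (mul_pos (by linarith) (by linarith)).ne'
    unfold kRenyi
    rw [mul_div_cancel₀ _ h]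
    ring
  -- integrability of x^α₀
  have hpow0_int : Integrable (fun x : ℝ => x ^ α₀) μ := by
    rw [show (fun x : ℝ => x ^ α₀)
        = fun x => α₀ * (α₀ - 1) * kRenyi α₀ x + α₀ * x - α₀ + 1
      from funext (hdecomp α₀ hα0)]
    exact (((hk0_int.const_mul _).add (hx_int.const_mul _)).sub
      (integrable_const _)).add (integrable_const _)
  -- bound on ∫ x^α₀
  have hC : ∫ x, x ^ α₀ ∂μ ≤ C := by
    have h1 : Integrable (fun x : ℝ => α₀ * (α₀ - 1) * kRenyi α₀ x + α₀ * x) μ :=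
      (hk0_int.const_mul _).add (hx_int.const_mul _)
    have h2 : Integrable (fun x : ℝ => α₀ * (α₀ - 1) * kRenyi α₀ x + α₀ * x - α₀) μ :=
      h1.sub (integrable_const _)
    have e : ∫ x, x ^ α₀ ∂μ = α₀ * (α₀ - 1) * (∫ x, kRenyi α₀ x ∂μ) + 1 := by
      rw [show (fun x : ℝ => x ^ α₀)
          = fun x => α₀ * (α₀ - 1) * kRenyi α₀ x + α₀ * x - α₀ + 1
        from funext (hdecomp α₀ hα0)]
      rw [integral_add h2 (integrable_const _), integral_sub h1 (integrable_const _),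
        integral_add (hk0_int.const_mul _) (hx_int.const_mul _),
        integral_const_mul, integral_const_mul, hmean, integral_const, integral_const]
      simp
    rw [e, hCdef]
    have : 0 ≤ α₀ * (α₀ - 1) := mul_nonneg (by linarith) (by linarith)
    nlinarith
  -- lintegral of ofReal x is 1
  have hLx : ∫⁻ x, ENNReal.ofReal x ∂μ = 1 := by
    rw [← ofReal_integral_eq_lintegral_ofReal hx_int hsupp, hmean, ENNReal.ofReal_one]
  -- lintegral of (ofReal x)^α₀
  have hpow0nn : ∀ᵐ x ∂μ, 0 ≤ x ^ α₀ := hsupp.mono fun x hx => Real.rpow_nonneg hx _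
  have hA0 : ∫⁻ x, ENNReal.ofReal x ^ α₀ ∂μ ≤ ENNReal.ofReal C := by
    have e : ∫⁻ x, ENNReal.ofReal x ^ α₀ ∂μ = ∫⁻ x, ENNReal.ofReal (x ^ α₀) ∂μ := by
      refine lintegral_congr_ae (hsupp.mono fun x hx => ?_)
      exact ENNReal.ofReal_rpow_of_nonneg hx (by linarith : (0:ℝ) ≤ α₀)
    rw [e, ← ofReal_integral_eq_lintegral_ofReal hpow0_int hpow0nn]
    exact ENNReal.ofReal_le_ofReal hC
  -- Hölder
  have hp : Real.HolderConjugate (1/θ) (1/(1-θ)) := by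
    rw [Real.holderConjugate_iff]
    constructor
    · rw [lt_div_iff₀ hθ0]; linarith
    · rw [one_div, one_div, inv_inv, inv_inv]; ring
  have hFmeas : Measurable fun x : ℝ => ENNReal.ofReal x := ENNReal.measurable_ofReal
  have holder := ENNReal.lintegral_mul_le_Lp_mul_Lq μ hp
    (f := fun x => (ENNReal.ofReal x ^ α₀) ^ θ) (g := fun x => ENNReal.ofReal x ^ (1 - θ))
    ((hFmeas.pow_const α₀).pow_const θ).aemeasurable
    (hFmeas.pow_const (1 - θ)).aemeasurable
  have hexp : α₀ * θ + (1 - θ) = α := by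
    have : α₀ - 1 ≠ 0 := by linarith
    have e : (α₀ - 1) * θ = α - 1 := by rw [hθdef]; exact mul_div_cancel₀ _ this
    linarith
  have hHα : ∫⁻ x, ENNReal.ofReal x ^ α ∂μ ≤ ENNReal.ofReal (C ^ θ) := by
    have eL : ∫⁻ x, ((fun x => (ENNReal.ofReal x ^ α₀) ^ θ) *
        (fun x => ENNReal.ofReal x ^ (1 - θ))) x ∂μ
        = ∫⁻ x, ENNReal.ofReal x ^ α ∂μ := by
      refine lintegral_congr fun x => ?_
      simp only [Pi.mul_apply]
      rw [← ENNReal.rpow_mul, ← ENNReal.rpow_add_of_nonneg _ _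
        (mul_nonneg (by linarith) hθ0.le) (by linarith), hexp]
    have eR1 : ∫⁻ x, ((ENNReal.ofReal x ^ α₀) ^ θ) ^ (1/θ) ∂μ
        = ∫⁻ x, ENNReal.ofReal x ^ α₀ ∂μ := by
      refine lintegral_congr fun x => ?_
      rw [← ENNReal.rpow_mul, mul_one_div_cancel hθ0.ne', ENNReal.rpow_one]
    have eR2 : ∫⁻ x, (ENNReal.ofReal x ^ (1 - θ)) ^ (1/(1-θ)) ∂μ
        = ∫⁻ x, ENNReal.ofReal x ∂μ := by
      refine lintegral_congr fun x => ?_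
      rw [← ENNReal.rpow_mul, mul_one_div_cancel (by linarith : (1:ℝ) - θ ≠ 0),
        ENNReal.rpow_one]
    rw [eL, eR1, eR2, hLx] at holder
    simp only [one_div, inv_inv] at holder
    rw [ENNReal.one_rpow, mul_one] at holder
    refine holder.trans ?_
    rw [← ENNReal.ofReal_rpow_of_nonneg (by linarith) hθ0.le]
    exact ENNReal.rpow_le_rpow hA0 hθ0.le
  -- integrability of x^α
  have hpowα_int : Integrable (fun x : ℝ => x ^ α) μ := by
    have hbound : Integrable (fun x : ℝ => x + x ^ α₀) μ := hx_int.add hpow0_int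
    refine hbound.mono' (measurable_id.pow_const α).aestronglyMeasurable ?_
    filter_upwards [hsupp] with x hx
    rw [Real.norm_eq_abs, abs_of_nonneg (Real.rpow_nonneg hx _)]
    rcases le_total x 1 with h1 | h1
    · rcases eq_or_lt_of_le hx with h0 | h0
      · rw [← h0, Real.zero_rpow (by positivity : α ≠ 0),
          Real.zero_rpow (by positivity : α₀ ≠ 0)]
        norm_num
      · have h := Real.rpow_le_rpow_of_exponent_ge h0 h1 hα.le
        rw [Real.rpow_one] at h
        have h2 := Real.rpow_nonneg hx α₀
        linarith
    · have h := Real.rpow_le_rpow_of_exponent_le h1 hαα.le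
      linarith
  have hpowαnn : ∀ᵐ x ∂μ, 0 ≤ x ^ α := hsupp.mono fun x hx => Real.rpow_nonneg hx _
  -- real bound on ∫ x^α
  have hIα : ∫ x, x ^ α ∂μ ≤ C ^ θ := by
    refine (ENNReal.ofReal_le_ofReal_iff (Real.rpow_nonneg (by linarith) θ)).1 ?_
    rw [ofReal_integral_eq_lintegral_ofReal hpowα_int hpowαnn]
    refine le_trans (le_of_eq ?_) hHα
    refine lintegral_congr_ae (hsupp.mono fun x hx => ?_)
    exact (ENNReal.ofReal_rpow_of_nonneg hx (by linarith : (0:ℝ) ≤ α)).symm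
  -- integrability of kRenyi α
  have hc : (0:ℝ) < α * (α - 1) := mul_pos (by linarith) (by linarith)
  have hkα_int : Integrable (kRenyi α) μ := by
    have : kRenyi α = fun x => (x ^ α - α * x + α - 1) / (α * (α - 1)) := rfl
    rw [this]
    simp_rw [div_eq_mul_inv]
    exact ((((hpowα_int.sub (hx_int.const_mul α)).add (integrable_const α)).sub
      (integrable_const 1)).mul_const _)
  -- value of ∫ kRenyi α
  have hIkα : ∫ x, kRenyi α x ∂μ = ((∫ x, x ^ α ∂μ) - 1) / (α * (α - 1)) := by
    unfold kRenyi
    rw [integral_div]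
    congr 1
    have h1 : Integrable (fun x : ℝ => x ^ α - α * x) μ :=
      hpowα_int.sub (hx_int.const_mul α)
    have h2 : Integrable (fun x : ℝ => x ^ α - α * x + α) μ :=
      h1.add (integrable_const α)
    rw [integral_sub h2 (integrable_const _), integral_add h1 (integrable_const _),
      integral_sub hpowα_int (hx_int.const_mul α), integral_const_mul, hmean,
      integral_const, integral_const]
    simp
  -- conclusion
  have hkαnn : ∀ᵐ x ∂μ, 0 ≤ kRenyi α x := hsupp.mono fun x hx => hknn α hα x hx
  rw [← ofReal_integral_eq_lintegral_ofReal hkα_int hkαnn]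
  apply ENNReal.ofReal_le_ofReal
  rw [hIkα, div_eq_inv_mul]
  exact mul_le_mul_of_nonneg_left (by linarith) (inv_nonneg.2 hc.le)
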